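/- Let K be a field, A, B ∈ K, let S be a finite multiset of elements of K, and let p_i = Σ_{t∈S} t^i denote its power sums (so p₀ = |S|). Then in the power series ring K[[u]]: Σ_{t∈S} [ (3t² + A)·u·(1 − tu)⁻¹ + 2·(t³ + A·t + B)·u²·(1 − tu)⁻² ] = Σ_{i≥1} h_i u^i, where h₁ = 3·p₂ + A·p₀ and h_i = (2i+1)·p_{i+1} + (2i−1)·A·p_{i−1} + 2(i−1)·B·p_{i−2} for all i ≥ 2. -/

import Mathlib

open PowerSeries

private lemma geom_inv {K : Type*} [Field K] (t : K) :
    (1 - C (R := K) t * X)⁻¹ = PowerSeries.mk fun n => t ^ n := by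
  rw [PowerSeries.inv_eq_iff_mul_eq_one (by simp)]
  ext n
  cases n with
  | zero => simp
  | succ n =>
    simp [mul_sub, mul_assoc, mul_comm, mul_left_comm, coeff_one, pow_succ,
      PowerSeries.coeff_succ_X_mul]

private lemma coeff_geom_sq {K : Type*} [Field K] (t : K) (n : ℕ) :
    coeff (R := K) n ((PowerSeries.mk fun n => t ^ n) * PowerSeries.mk fun n => t ^ n)
      = ((n : K) + 1) * t ^ n := by
  rw [PowerSeries.coeff_mul]
  have : ∀ x ∈ Finset.HasAntidiagonal.antidiagonal n,
      coeff (R := K) x.1 (PowerSeries.mk fun n => t ^ n) * coeff (R := K) x.2 (PowerSeries.mk fun n => t ^ n)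
        = t ^ n := by
    intro x hx
    rw [Finset.HasAntidiagonal.mem_antidiagonal] at hx
    simp only [coeff_mk, ← pow_add, hx]
  rw [Finset.sum_congr rfl this, Finset.sum_const, Finset.Nat.card_antidiagonal,
    nsmul_eq_mul]
  push_cast
  ring

private lemma coeff_term {K : Type*} [Field K] (a b t : K) (n : ℕ) :
    coeff (R := K) n (C (R := K) a * X * (1 - C (R := K) t * X)⁻¹
        + 2 * C (R := K) b * X ^ 2 * ((1 - C (R := K) t * X)⁻¹) ^ 2)
      = (if 1 ≤ n then a * t ^ (n - 1) else 0)
        + (if 2 ≤ n then 2 * b * (((n - 2 : ℕ) : K) + 1) * t ^ (n - 2) else 0) := by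
  rw [geom_inv]
  have h2 : (2 : K⟦X⟧) = C (R := K) 2 := by rw [map_ofNat]
  have : C (R := K) a * X * PowerSeries.mk (fun n => t ^ n)
        + 2 * C (R := K) b * X ^ 2 * (PowerSeries.mk fun n => t ^ n) ^ 2
      = (C (R := K) a * PowerSeries.mk (fun n => t ^ n)) * X
        + (C (R := K) (2 * b) * ((PowerSeries.mk fun n => t ^ n) * PowerSeries.mk fun n => t ^ n))
            * X ^ 2 := by
    rw [map_mul, ← h2]; ring
  rw [this, map_add, PowerSeries.coeff_mul_X_pow' _ 2 n, ← pow_one (X : K⟦X⟧),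
    PowerSeries.coeff_mul_X_pow' _ 1 n]
  split_ifs <;>
    simp_all [coeff_geom_sq, mul_assoc]



open PowerSeries

/-- Relation (fnpn) of the paper, linking the coefficients `h_i` of the expansion at
infinity of `N(x)/D(x)` to the power sums `p_i` of the roots of `D`: in `K[[u]]`,
`Σ_{t∈S} [(3t²+A)·u/(1−tu) + 2(t³+At+B)·u²/(1−tu)²] = Σ_{i≥1} h_i u^i` where
`h₁ = 3p₂ + A·p₀` and `h_i = (2i+1)p_{i+1} + (2i−1)A·p_{i−1} + 2(i−1)B·p_{i−2}`
for `i ≥ 2`. -/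
theorem expansion_at_infinity_power_sums {K : Type*} [Field K] (A B : K)
    (S : Multiset K) (p : ℕ → K) (hp : ∀ i, p i = (S.map (fun t => t ^ i)).sum)
    (h : ℕ → K)
    (hh1 : h 1 = 3 * p 2 + A * p 0)
    (hhi : ∀ i, 2 ≤ i →
      h i = (2 * (i : K) + 1) * p (i + 1) + (2 * (i : K) - 1) * A * p (i - 1)
              + 2 * ((i : K) - 1) * B * p (i - 2)) :
    (S.map (fun t =>
        C (R := K) (3 * t ^ 2 + A) * X * (1 - C (R := K) t * X)⁻¹
          + 2 * C (R := K) (t ^ 3 + A * t + B) * X ^ 2 * ((1 - C (R := K) t * X)⁻¹) ^ 2)).sum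
      = PowerSeries.mk (fun i => if i = 0 then 0 else h i) := by
  ext n
  rw [coeff_mk, map_multiset_sum, Multiset.map_map]
  simp only [Function.comp, coeff_term]
  match n with
  | 0 => simp
  | 1 =>
    rw [if_neg one_ne_zero, hh1, hp, hp]
    simp only [if_pos (le_refl 1), if_neg (by omega : ¬ 2 ≤ 1)]
    have hmap : S.map (fun t => (3 * t ^ 2 + A) * t ^ (1 - 1) + 0)
        = S.map (fun t => 3 * t ^ 2 + A * t ^ 0) :=
      Multiset.map_congr rfl (fun t _ => by norm_num)
    rw [hmap, Multiset.sum_map_add, Multiset.sum_map_mul_left, Multiset.sum_map_mul_left]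
  | (m + 2) =>
    rw [if_neg (by omega : ¬ m + 2 = 0), hhi (m + 2) (by omega), hp, hp, hp]
    simp only [if_pos (by omega : 1 ≤ m + 2), if_pos (by omega : 2 ≤ m + 2)]
    have hmap : S.map (fun t => (3 * t ^ 2 + A) * t ^ (m + 2 - 1)
          + 2 * (t ^ 3 + A * t + B) * (((m + 2 - 2 : ℕ) : K) + 1) * t ^ (m + 2 - 2))
        = S.map (fun t => (2 * ((m + 2 : ℕ) : K) + 1) * t ^ (m + 2 + 1)
            + ((2 * ((m + 2 : ℕ) : K) - 1) * A * t ^ (m + 2 - 1)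
              + 2 * (((m + 2 : ℕ) : K) - 1) * B * t ^ (m + 2 - 2))) :=
      Multiset.map_congr rfl (fun t _ => by
        have e1 : m + 2 - 1 = m + 1 := by omega
        have e2 : m + 2 - 2 = m := by omega
        rw [e1, e2]
        push_cast
        ring)
    rw [hmap, Multiset.sum_map_add, Multiset.sum_map_add, Multiset.sum_map_mul_left,
      Multiset.sum_map_mul_left, Multiset.sum_map_mul_left]
    ring
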